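/- Fix 0 < α < 1 and β > 0. Let (S_n) be the symmetric random walk on ℤ whose jump distribution is P(J_1 = n) = P(J_1 = −n) = c^{−1} p_n for n ≥ 1 and P(J_1 = 0) = 0, where p_{2n} = (2n)^{−α−1} and p_{2n−1} = (2n−1)^{−β−1} for n ≥ 1, and c = 2∑_{n≥1} p_n is the normalizing constant. Then (S_n) is transient, i.e. |S_n| → ∞ almost surely as n → ∞. -/

import Mathlib

open MeasureTheory Filter ProbabilityTheory

/-- Orthogonality: `∫_{-π}^{π} cos (t k) dt = 2π` if `k = 0`, else `0`. -/
lemma aux_orth (k : ℤ) :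
    (∫ t in (-Real.pi)..Real.pi, Real.cos (t * k)) =
      if k = 0 then 2 * Real.pi else 0 := by
  rcases eq_or_ne k 0 with rfl | hk
  · simp [two_mul]
  · have hk' : (k : ℝ) ≠ 0 := Int.cast_ne_zero.2 hk
    have hderiv : ∀ t ∈ Set.uIcc (-Real.pi) Real.pi,
        HasDerivAt (fun u => Real.sin (u * k) / k) (Real.cos (t * k)) t := by
      intro t _
      have h1 : HasDerivAt (fun u : ℝ => u * k) (k : ℝ) t := by
        simpa using (hasDerivAt_id t).mul_const (k : ℝ)
      have h2 := (Real.hasDerivAt_sin (t * k)).comp t h1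
      have h3 := h2.div_const (k : ℝ)
      have heq : Real.cos (t * k) * k / k = Real.cos (t * k) := by
        field_simp
      simpa [heq] using h3
    rw [intervalIntegral.integral_eq_sub_of_hasDerivAt hderiv
        ((Continuous.intervalIntegrable (by continuity) _ _))]
    rw [if_neg hk]
    have h1 : Real.pi * k = (k : ℝ) * Real.pi := by ring
    have h2 : -Real.pi * k = ((-k : ℤ) : ℝ) * Real.pi := by push_cast; ring
    rw [h1, h2, Real.sin_int_mul_pi, Real.sin_int_mul_pi]
    simp

lemma aux_geom {x : ℝ} (h0 : 0 ≤ x) (h1 : x < 1) (N : ℕ) :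
    ∑ n ∈ Finset.range N, x ^ n ≤ (1 - x)⁻¹ := by
  calc ∑ n ∈ Finset.range N, x ^ n ≤ ∑' n : ℕ, x ^ n :=
        Summable.sum_le_tsum _ (fun i _ => pow_nonneg h0 i) (summable_geometric_of_lt_one h0 h1)
    _ = (1 - x)⁻¹ := tsum_geometric_of_lt_one h0 h1

set_option maxHeartbeats 4000000 in
theorem multiple_stability_walk_transient
    (α β : ℝ) (hα₀ : 0 < α) (hα₁ : α < 1) (hβ : 0 < β)
    (p : ℕ → ℝ)
    (hpdef : ∀ n : ℕ, 1 ≤ n →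
      p n = if Even n then (n : ℝ) ^ (-α - 1) else (n : ℝ) ^ (-β - 1))
    (c : ℝ) (hc : c = 2 * ∑' n : ℕ, p (n + 1))
    {Ω : Type*} [MeasurableSpace Ω] (P : Measure Ω) [IsProbabilityMeasure P]
    (J : ℕ → Ω → ℤ) (hmeas : ∀ k, Measurable (J k))
    (hindep : iIndepFun J P)
    (hident : ∀ k, Measure.map (J k) P = Measure.map (J 0) P)
    (hzero : P {ω | J 0 ω = 0} = 0)
    (hlaw : ∀ n : ℕ, 1 ≤ n →
      P {ω | J 0 ω = (n : ℤ)} = ENNReal.ofReal (p n / c) ∧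
      P {ω | J 0 ω = -(n : ℤ)} = ENNReal.ofReal (p n / c)) :
    ∀ᵐ ω ∂P, Tendsto (fun n : ℕ => |∑ k ∈ Finset.range n, J k ω|) atTop atTop := by
  classical
  have hJ0 : Measurable (J 0) := hmeas 0
  set μ : Measure ℤ := Measure.map (J 0) P with hμdef
  haveI : IsProbabilityMeasure μ := Measure.isProbabilityMeasure_map hJ0.aemeasurable
  set q : ℤ → ℝ := fun m => (μ {m}).toReal with hqdef
  have hμm : ∀ m : ℤ, μ {m} = P {ω | J 0 ω = m} := by
    intro m
    rw [hμdef, Measure.map_apply hJ0 (measurableSet_singleton m)]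
    rfl
  -- positivity of p, c
  have hppos : ∀ n : ℕ, 1 ≤ n → 0 < p n := by
    intro n hn
    have hn' : (0:ℝ) < n := by exact_mod_cast hn
    rw [hpdef n hn]
    split_ifs <;> exact Real.rpow_pos_of_pos hn' _
  have hγ : 0 < min α β := lt_min hα₀ hβ
  have hple : ∀ n : ℕ, 1 ≤ n → p n ≤ (n:ℝ) ^ (-(min α β) - 1) := by
    intro n hn
    have h1 : (1:ℝ) ≤ n := by exact_mod_cast hn
    rw [hpdef n hn]
    split_ifs
    · exact Real.rpow_le_rpow_of_exponent_le h1 (by linarith [min_le_left α β])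
    · exact Real.rpow_le_rpow_of_exponent_le h1 (by linarith [min_le_right α β])
  have hpsummable : Summable (fun n : ℕ => p (n + 1)) := by
    have h2 : Summable (fun n : ℕ => (n:ℝ) ^ (-(min α β) - 1)) :=
      Real.summable_nat_rpow.2 (by linarith)
    have h3 : Summable (fun n : ℕ => ((n + 1 : ℕ):ℝ) ^ (-(min α β) - 1)) :=
      (summable_nat_add_iff 1).2 h2
    exact Summable.of_nonneg_of_le (fun n => (hppos (n+1) (by omega)).le)
      (fun n => hple (n+1) (by omega)) h3
  have hcpos : 0 < c := by
    rw [hc]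
    have := Summable.tsum_pos hpsummable (fun i => (hppos (i+1) (by omega)).le) 0 (hppos 1 le_rfl)
    linarith
  -- values of q
  have hqval : ∀ n : ℕ, 1 ≤ n → q (n : ℤ) = p n / c ∧ q (-(n : ℤ)) = p n / c := by
    intro n hn
    have h := hlaw n hn
    have hnn : 0 ≤ p n / c := div_nonneg (hppos n hn).le hcpos.le
    constructor
    · show (μ {(n:ℤ)}).toReal = p n / c
      rw [hμm, h.1, ENNReal.toReal_ofReal hnn]
    · show (μ {-(n:ℤ)}).toReal = p n / c
      rw [hμm, h.2, ENNReal.toReal_ofReal hnn]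
  have hq1pos' : True := trivial
  have hq0 : q 0 = 0 := by
    show (μ {(0:ℤ)}).toReal = 0
    rw [hμm, hzero]; simp
  have hqnn : ∀ m : ℤ, 0 ≤ q m := fun m => ENNReal.toReal_nonneg
  have hqsymm : ∀ m : ℤ, q (-m) = q m := by
    intro m
    obtain ⟨n, rfl | rfl⟩ := m.eq_nat_or_neg
    · rcases Nat.eq_zero_or_pos n with rfl | hn
      · simp
      · rw [(hqval n hn).1, (hqval n hn).2]
    · rcases Nat.eq_zero_or_pos n with rfl | hn
      · simp
      · rw [neg_neg, (hqval n hn).1, (hqval n hn).2]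
  -- summability / total mass of q
  have hμsum : ∑' m : ℤ, μ {m} = 1 := by
    rw [← measure_iUnion (fun a b hab => by simpa [Function.onFun, Set.disjoint_singleton] using hab)
      (fun m => measurableSet_singleton m)]
    rw [Set.iUnion_of_singleton]
    exact measure_univ
  have hqsum : Summable q := by
    apply ENNReal.summable_toReal
    rw [hμsum]; exact ENNReal.one_ne_top
  have hqtot : ∑' m : ℤ, q m = 1 := by
    calc ∑' m : ℤ, q m = (∑' m : ℤ, μ {m}).toReal :=
          (ENNReal.tsum_toReal_eq (fun m => measure_ne_top μ _)).symm
      _ = 1 := by rw [hμsum]; simp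
  -- representation of integrals of bounded functions of J 0
  have hsummand : ∀ (g : ℤ → ℝ) (C : ℝ), (∀ m, |g m| ≤ C) →
      Summable (fun m : ℤ => q m * g m) := by
    intro g C hg
    have hb : ∀ m, |q m * g m| ≤ C * q m := by
      intro m
      rw [abs_mul, abs_of_nonneg (hqnn m)]
      calc q m * |g m| ≤ q m * C := mul_le_mul_of_nonneg_left (hg m) (hqnn m)
        _ = C * q m := mul_comm _ _
    exact Summable.of_abs (Summable.of_nonneg_of_le (fun m => abs_nonneg _) hb (hqsum.mul_left C))
  have hrep : ∀ (g : ℤ → ℝ) (C : ℝ), (∀ m, |g m| ≤ C) →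
      ∫ ω, g (J 0 ω) ∂P = ∑' m : ℤ, q m * g m := by
    intro g C hg
    have hgm : Measurable g := measurable_of_countable g
    have hgi : Integrable g μ := by
      refine (integrable_const C).mono' hgm.aestronglyMeasurable ?_
      exact ae_of_all _ (fun m => by simpa [Real.norm_eq_abs] using hg m)
    have h1 : ∫ ω, g (J 0 ω) ∂P = ∫ m, g m ∂μ :=
      (integral_map hJ0.aemeasurable hgi.1).symm
    rw [h1, integral_countable' hgi]
    simp [hqdef, smul_eq_mul, Measure.real]
  have hrepk : ∀ (k : ℕ) (g : ℤ → ℝ), (∀ m, |g m| ≤ 1) →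
      ∫ ω, g (J k ω) ∂P = ∫ ω, g (J 0 ω) ∂P := by
    intro k g hg
    have hgm : Measurable g := measurable_of_countable g
    rw [← integral_map (hmeas k).aemeasurable hgm.aestronglyMeasurable, hident k,
      integral_map hJ0.aemeasurable hgm.aestronglyMeasurable]
  have PInt : ∀ (f : Ω → ℝ), Measurable f → (∀ ω, |f ω| ≤ 1) → Integrable f P := by
    intro f hf hb
    exact (integrable_const (1:ℝ)).mono' hf.aestronglyMeasurable
      (ae_of_all _ (fun ω => by simpa [Real.norm_eq_abs] using hb ω))
  -- the characteristic function
  set φ : ℝ → ℝ := fun t => ∫ ω, Real.cos (t * ((J 0 ω : ℤ) : ℝ)) ∂P with hφdef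
  have castmeas : Measurable (fun m : ℤ => (m : ℝ)) := measurable_of_countable _
  have φ_repr : ∀ t, φ t = ∑' m : ℤ, q m * Real.cos (t * (m : ℝ)) := by
    intro t
    exact hrep (fun m => Real.cos (t * (m : ℝ))) 1 (fun m => Real.abs_cos_le_one _)
  have φ_cont : Continuous φ := by
    apply continuous_of_dominated (bound := fun _ : Ω => (1:ℝ))
    · intro t
      exact ((Real.measurable_cos.comp ((measurable_const.mul (castmeas.comp hJ0))))).aestronglyMeasurable
    · intro t
      exact ae_of_all _ (fun ω => by simpa [Real.norm_eq_abs] using Real.abs_cos_le_one _)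
    · exact integrable_const 1
    · exact ae_of_all _ (fun ω => by
        exact Real.continuous_cos.comp (continuous_id.mul continuous_const))
  have φ_le : ∀ t, |φ t| ≤ 1 := by
    intro t
    have h1 := norm_integral_le_integral_norm (μ := P)
      (fun ω => Real.cos (t * ((J 0 ω : ℤ) : ℝ)))
    have h2 : ∫ ω, ‖Real.cos (t * ((J 0 ω : ℤ) : ℝ))‖ ∂P ≤ ∫ _ω, (1:ℝ) ∂P := by
      apply integral_mono _ (integrable_const 1)
      · intro ω
        simpa [Real.norm_eq_abs] using Real.abs_cos_le_one _
      · refine PInt _ ((Real.measurable_cos.comp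
          ((measurable_const.mul (castmeas.comp hJ0)))).norm) ?_
        intro ω
        simpa [Real.norm_eq_abs, abs_abs] using Real.abs_cos_le_one _
    have h3 : ∫ _ω, (1:ℝ) ∂P = 1 := by simp
    calc |φ t| = ‖φ t‖ := (Real.norm_eq_abs _).symm
      _ ≤ ∫ ω, ‖Real.cos (t * ((J 0 ω : ℤ) : ℝ))‖ ∂P := h1
      _ ≤ 1 := by rw [← h3]; exact h2
  have φ_even : ∀ t, φ (-t) = φ t := by
    intro t
    simp only [hφdef, neg_mul, Real.cos_neg]
  have hsin0 : ∀ t, ∫ ω, Real.sin (t * ((J 0 ω : ℤ) : ℝ)) ∂P = 0 := by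
    intro t
    rw [hrep (fun m => Real.sin (t * (m : ℝ))) 1 (fun m => Real.abs_sin_le_one _)]
    set u : ℤ → ℝ := fun m => q m * Real.sin (t * (m : ℝ)) with hu
    have h1 : ∑' m, u m = ∑' m, u (-m) := ((Equiv.neg ℤ).tsum_eq u).symm
    have h2 : ∀ m : ℤ, u (-m) = - u m := by
      intro m
      simp only [hu]
      rw [hqsymm m]
      push_cast
      rw [mul_neg, Real.sin_neg, mul_neg]
    have h3 : ∑' m, u m = - ∑' m, u m := by
      conv_lhs => rw [h1]
      simp only [h2]
      exact tsum_neg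
    linarith
  have hsub : ∀ (t : ℝ) (F : Finset ℤ),
      ∑ m ∈ F, q m * (1 - Real.cos (t * (m : ℝ))) ≤ 1 - φ t := by
    intro t F
    have hb : ∀ m : ℤ, |1 - Real.cos (t * (m : ℝ))| ≤ 2 := by
      intro m
      rw [abs_le]
      constructor <;>
        nlinarith [Real.cos_le_one (t * (m:ℝ)), Real.neg_one_le_cos (t * (m:ℝ))]
    have hsum1 : Summable (fun m : ℤ => q m * (1 - Real.cos (t * (m : ℝ)))) := hsummand _ 2 hb
    have hsum2 : Summable (fun m : ℤ => q m * Real.cos (t * (m : ℝ))) :=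
      hsummand _ 1 (fun m => Real.abs_cos_le_one _)
    have hrepr : ∑' m : ℤ, q m * (1 - Real.cos (t * (m : ℝ))) = 1 - φ t := by
      have he : (fun m : ℤ => q m * (1 - Real.cos (t * (m : ℝ))))
          = fun m : ℤ => q m - q m * Real.cos (t * (m : ℝ)) := by funext m; ring
      rw [he, Summable.tsum_sub hqsum hsum2, hqtot, φ_repr t]
    calc ∑ m ∈ F, q m * (1 - Real.cos (t * (m : ℝ)))
        ≤ ∑' m : ℤ, q m * (1 - Real.cos (t * (m : ℝ))) :=
          Summable.sum_le_tsum F (fun m _ => mul_nonneg (hqnn m)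
            (by nlinarith [Real.cos_le_one (t * (m:ℝ))])) hsum1
      _ = 1 - φ t := hrepr
  have hsub' : ∀ (t : ℝ) (F : Finset ℤ),
      ∑ m ∈ F, q m * (1 + Real.cos (t * (m : ℝ))) ≤ 1 + φ t := by
    intro t F
    have hb : ∀ m : ℤ, |1 + Real.cos (t * (m : ℝ))| ≤ 2 := by
      intro m
      rw [abs_le]
      constructor <;>
        nlinarith [Real.cos_le_one (t * (m:ℝ)), Real.neg_one_le_cos (t * (m:ℝ))]
    have hsum1 : Summable (fun m : ℤ => q m * (1 + Real.cos (t * (m : ℝ)))) := hsummand _ 2 hb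
    have hsum2 : Summable (fun m : ℤ => q m * Real.cos (t * (m : ℝ))) :=
      hsummand _ 1 (fun m => Real.abs_cos_le_one _)
    have hrepr : ∑' m : ℤ, q m * (1 + Real.cos (t * (m : ℝ))) = 1 + φ t := by
      have he : (fun m : ℤ => q m * (1 + Real.cos (t * (m : ℝ))))
          = fun m : ℤ => q m + q m * Real.cos (t * (m : ℝ)) := by funext m; ring
      rw [he, Summable.tsum_add hqsum hsum2, hqtot, φ_repr t]
    calc ∑ m ∈ F, q m * (1 + Real.cos (t * (m : ℝ)))
        ≤ ∑' m : ℤ, q m * (1 + Real.cos (t * (m : ℝ))) :=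
          Summable.sum_le_tsum F (fun m _ => mul_nonneg (hqnn m)
            (by nlinarith [Real.neg_one_le_cos (t * (m:ℝ))])) hsum1
      _ = 1 + φ t := hrepr
  -- the walk
  set S : ℕ → Ω → ℤ := fun n ω => ∑ k ∈ Finset.range n, J k ω with hSdef
  have hSmeas : ∀ n, Measurable (S n) := by
    intro n; exact Finset.measurable_sum _ (fun k _ => hmeas k)
  have hchar : ∀ (t : ℝ) (n : ℕ),
      (∫ ω, Real.cos (t * ((S n ω : ℤ) : ℝ)) ∂P) = φ t ^ n ∧
      (∫ ω, Real.sin (t * ((S n ω : ℤ) : ℝ)) ∂P) = 0 := by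
    intro t n
    induction n with
    | zero => constructor <;> simp [hSdef]
    | succ n ih =>
      obtain ⟨ihc, ihs⟩ := ih
      have hSn : Measurable (S n) := hSmeas n
      have hJn : Measurable (J n) := hmeas n
      have hSeq : S n = ∑ j ∈ Finset.range n, J j := by
        funext ω; simp [hSdef]
      have hind : IndepFun (S n) (J n) P := by
        rw [hSeq]; exact hindep.indepFun_sum_range_succ hmeas n
      set gc : ℤ → ℝ := fun m => Real.cos (t * (m : ℝ)) with hgc
      set gs : ℤ → ℝ := fun m => Real.sin (t * (m : ℝ)) with hgs
      have hmc : ∀ (X : Ω → ℤ), Measurable X → Measurable fun ω => gc (X ω) :=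
        fun X hX => (measurable_of_countable gc).comp hX
      have hms : ∀ (X : Ω → ℤ), Measurable X → Measurable fun ω => gs (X ω) :=
        fun X hX => (measurable_of_countable gs).comp hX
      have hindcc : IndepFun (fun ω => gc (S n ω)) (fun ω => gc (J n ω)) P :=
        hind.comp (measurable_of_countable gc) (measurable_of_countable gc)
      have hindcs : IndepFun (fun ω => gc (S n ω)) (fun ω => gs (J n ω)) P :=
        hind.comp (measurable_of_countable gc) (measurable_of_countable gs)
      have hindsc : IndepFun (fun ω => gs (S n ω)) (fun ω => gc (J n ω)) P :=
        hind.comp (measurable_of_countable gs) (measurable_of_countable gc)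
      have hindss : IndepFun (fun ω => gs (S n ω)) (fun ω => gs (J n ω)) P :=
        hind.comp (measurable_of_countable gs) (measurable_of_countable gs)
      have hJc : ∫ ω, gc (J n ω) ∂P = φ t := by
        rw [hrepk n gc (fun m => Real.abs_cos_le_one _)]
      have hJs : ∫ ω, gs (J n ω) ∂P = 0 := by
        rw [hrepk n gs (fun m => Real.abs_sin_le_one _)]
        exact hsin0 t
      have hSc : ∫ ω, gc (S n ω) ∂P = φ t ^ n := ihc
      have hSs : ∫ ω, gs (S n ω) ∂P = 0 := ihs
      have hexp : ∀ ω, ((S (n+1) ω : ℤ) : ℝ) = ((S n ω : ℤ) : ℝ) + ((J n ω : ℤ) : ℝ) := by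
        intro ω
        simp only [hSdef, Finset.sum_range_succ]
        push_cast
        ring
      have hbcc : ∀ x y : ℝ, |Real.cos x * Real.cos y| ≤ 1 := fun x y => by
        rw [abs_mul]
        nlinarith [Real.abs_cos_le_one x, Real.abs_cos_le_one y, abs_nonneg (Real.cos x),
          abs_nonneg (Real.cos y)]
      have hbss : ∀ x y : ℝ, |Real.sin x * Real.sin y| ≤ 1 := fun x y => by
        rw [abs_mul]
        nlinarith [Real.abs_sin_le_one x, Real.abs_sin_le_one y, abs_nonneg (Real.sin x),
          abs_nonneg (Real.sin y)]
      have hbsc : ∀ x y : ℝ, |Real.sin x * Real.cos y| ≤ 1 := fun x y => by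
        rw [abs_mul]
        nlinarith [Real.abs_sin_le_one x, Real.abs_cos_le_one y, abs_nonneg (Real.sin x),
          abs_nonneg (Real.cos y)]
      have hbcs : ∀ x y : ℝ, |Real.cos x * Real.sin y| ≤ 1 := fun x y => by
        rw [abs_mul]
        nlinarith [Real.abs_cos_le_one x, Real.abs_sin_le_one y, abs_nonneg (Real.cos x),
          abs_nonneg (Real.sin y)]
      constructor
      · have h1 : (fun ω => Real.cos (t * ((S (n+1) ω : ℤ) : ℝ)))
            = fun ω => gc (S n ω) * gc (J n ω) - gs (S n ω) * gs (J n ω) := by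
          funext ω
          rw [hexp ω, mul_add, Real.cos_add]
        rw [h1, integral_sub
          (PInt (fun ω => gc (S n ω) * gc (J n ω)) ((hmc _ hSn).mul (hmc _ hJn)) (fun ω => hbcc _ _))
          (PInt (fun ω => gs (S n ω) * gs (J n ω)) ((hms _ hSn).mul (hms _ hJn)) (fun ω => hbss _ _))]
        rw [show ∫ ω, gc (S n ω) * gc (J n ω) ∂P = (∫ ω, gc (S n ω) ∂P) * ∫ ω, gc (J n ω) ∂P from
            hindcc.integral_mul_eq_mul_integral (hmc _ hSn).aestronglyMeasurable (hmc _ hJn).aestronglyMeasurable,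
          show ∫ ω, gs (S n ω) * gs (J n ω) ∂P = (∫ ω, gs (S n ω) ∂P) * ∫ ω, gs (J n ω) ∂P from
            hindss.integral_mul_eq_mul_integral (hms _ hSn).aestronglyMeasurable (hms _ hJn).aestronglyMeasurable,
          hJc, hJs, hSc, hSs, pow_succ]
        ring
      · have h1 : (fun ω => Real.sin (t * ((S (n+1) ω : ℤ) : ℝ)))
            = fun ω => gs (S n ω) * gc (J n ω) + gc (S n ω) * gs (J n ω) := by
          funext ω
          rw [hexp ω, mul_add, Real.sin_add]
        rw [h1, integral_add
          (PInt (fun ω => gs (S n ω) * gc (J n ω)) ((hms _ hSn).mul (hmc _ hJn)) (fun ω => hbsc _ _))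
          (PInt (fun ω => gc (S n ω) * gs (J n ω)) ((hmc _ hSn).mul (hms _ hJn)) (fun ω => hbcs _ _))]
        rw [show ∫ ω, gs (S n ω) * gc (J n ω) ∂P = (∫ ω, gs (S n ω) ∂P) * ∫ ω, gc (J n ω) ∂P from
            hindsc.integral_mul_eq_mul_integral (hms _ hSn).aestronglyMeasurable (hmc _ hJn).aestronglyMeasurable,
          show ∫ ω, gc (S n ω) * gs (J n ω) ∂P = (∫ ω, gc (S n ω) ∂P) * ∫ ω, gs (J n ω) ∂P from
            hindcs.integral_mul_eq_mul_integral (hmc _ hSn).aestronglyMeasurable (hms _ hJn).aestronglyMeasurable,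
          hJc, hJs, hSc, hSs]
        ring
  -- Fourier inversion
  have hinv : ∀ (n : ℕ) (x : ℤ),
      (P {ω | S n ω = x}).toReal * (2 * Real.pi)
        = ∫ t in (-Real.pi)..Real.pi, Real.cos (t * (x : ℝ)) * φ t ^ n := by
    intro n x
    have hπ : (-Real.pi) ≤ Real.pi := by linarith [Real.pi_pos]
    have hbmul : ∀ u v : ℝ, |u| ≤ 1 → |v| ≤ 1 → |u * v| ≤ 1 := fun u v hu hv => by
      rw [abs_mul]
      nlinarith [abs_nonneg u, abs_nonneg v]
    set F : ℝ → Ω → ℝ := fun t ω => Real.cos (t * ((S n ω - x : ℤ) : ℝ)) with hF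
    have hFmeas : Measurable (Function.uncurry F) := by
      apply Real.measurable_cos.comp
      exact measurable_fst.mul
        ((castmeas.comp ((hSmeas n).sub measurable_const)).comp measurable_snd)
    haveI : IsFiniteMeasure (volume.restrict (Set.Ioc (-Real.pi) Real.pi)) := by
      constructor
      rw [Measure.restrict_apply_univ]
      simp [Real.volume_Ioc]
    have hFint : Integrable (Function.uncurry F)
        ((volume.restrict (Set.Ioc (-Real.pi) Real.pi)).prod P) := by
      refine (integrable_const (1:ℝ)).mono' hFmeas.aestronglyMeasurable ?_
      exact ae_of_all _ (fun z => by rw [Real.norm_eq_abs]; exact Real.abs_cos_le_one _)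
    have hswap := MeasureTheory.integral_integral_swap hFint
    have hmeasset : MeasurableSet {ω | S n ω = x} := (hSmeas n) (measurableSet_singleton x)
    have hinner : ∀ t : ℝ, ∫ ω, F t ω ∂P = Real.cos (t * (x : ℝ)) * φ t ^ n := by
      intro t
      have h1 : (fun ω => F t ω) = fun ω =>
          Real.cos (t * ((S n ω : ℤ) : ℝ)) * Real.cos (t * (x : ℝ))
          + Real.sin (t * ((S n ω : ℤ) : ℝ)) * Real.sin (t * (x : ℝ)) := by
        funext ω
        have hcast : ((S n ω - x : ℤ) : ℝ) = ((S n ω : ℤ) : ℝ) - (x : ℝ) := by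
          push_cast; ring
        show Real.cos (t * ((S n ω - x : ℤ) : ℝ)) = _
        rw [hcast, mul_sub, Real.cos_sub]
      have hm1 : Measurable fun ω => Real.cos (t * ((S n ω : ℤ) : ℝ)) :=
        (measurable_of_countable (fun m : ℤ => Real.cos (t * (m : ℝ)))).comp (hSmeas n)
      have hm2 : Measurable fun ω => Real.sin (t * ((S n ω : ℤ) : ℝ)) :=
        (measurable_of_countable (fun m : ℤ => Real.sin (t * (m : ℝ)))).comp (hSmeas n)
      rw [h1, integral_add
        (PInt (fun ω => Real.cos (t * ((S n ω : ℤ) : ℝ)) * Real.cos (t * (x : ℝ))) (hm1.mul measurable_const)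
          (fun ω => hbmul _ _ (Real.abs_cos_le_one _) (Real.abs_cos_le_one _)))
        (PInt (fun ω => Real.sin (t * ((S n ω : ℤ) : ℝ)) * Real.sin (t * (x : ℝ))) (hm2.mul measurable_const)
          (fun ω => hbmul _ _ (Real.abs_sin_le_one _) (Real.abs_sin_le_one _))),
        integral_mul_const, integral_mul_const, (hchar t n).1, (hchar t n).2]
      ring
    have hinner2 : ∀ ω : Ω, (∫ t in Set.Ioc (-Real.pi) Real.pi, F t ω) =
        Set.indicator {ω' | S n ω' = x} (fun _ => 2 * Real.pi) ω := by
      intro ω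
      rw [← intervalIntegral.integral_of_le hπ]
      have horth := aux_orth (S n ω - x)
      by_cases h : S n ω = x
      · rw [show (∫ t in (-Real.pi)..Real.pi, F t ω) = ∫ t in (-Real.pi)..Real.pi,
          Real.cos (t * ((S n ω - x : ℤ) : ℝ)) from rfl, horth, if_pos (by omega)]
        simp [Set.indicator, h]
      · rw [show (∫ t in (-Real.pi)..Real.pi, F t ω) = ∫ t in (-Real.pi)..Real.pi,
          Real.cos (t * ((S n ω - x : ℤ) : ℝ)) from rfl, horth, if_neg (by omega)]
        simp [Set.indicator, h]
    calc (P {ω | S n ω = x}).toReal * (2 * Real.pi)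
        = ∫ ω, Set.indicator {ω' | S n ω' = x} (fun _ => 2 * Real.pi) ω ∂P := by
          rw [integral_indicator_const _ hmeasset, smul_eq_mul]; rfl
      _ = ∫ ω, (∫ t in Set.Ioc (-Real.pi) Real.pi, F t ω) ∂P :=
          integral_congr_ae (ae_of_all _ fun ω => (hinner2 ω).symm)
      _ = ∫ t in Set.Ioc (-Real.pi) Real.pi, (∫ ω, F t ω ∂P) := hswap.symm
      _ = ∫ t in Set.Ioc (-Real.pi) Real.pi, Real.cos (t * (x : ℝ)) * φ t ^ n :=
          integral_congr_ae (ae_of_all _ fun t => hinner t)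
      _ = ∫ t in (-Real.pi)..Real.pi, Real.cos (t * (x : ℝ)) * φ t ^ n :=
          (intervalIntegral.integral_of_le hπ).symm
  -- lower bounds on 1 ± φ
  have hq1pos : 0 < q 1 := by
    rw [show ((1:ℤ)) = ((1:ℕ):ℤ) by norm_num, (hqval 1 le_rfl).1]
    exact div_pos (hppos 1 le_rfl) hcpos
  have hq2pos : 0 < q 2 := by
    rw [show ((2:ℤ)) = ((2:ℕ):ℤ) by norm_num, (hqval 2 (by omega)).1]
    exact div_pos (hppos 2 (by omega)) hcpos
  have hneg1 : ∀ t : ℝ, -1 < φ t := by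
    intro t
    have h12 := hsub' t {1, 2}
    have hsum12 : ∑ m ∈ ({1, 2} : Finset ℤ), q m * (1 + Real.cos (t * (m : ℝ)))
        = q 1 * (1 + Real.cos t) + q 2 * (1 + Real.cos (2 * t)) := by
      rw [Finset.sum_pair (by norm_num : (1:ℤ) ≠ 2)]
      norm_num [mul_comm]
    rw [hsum12] at h12
    have hct : Real.cos (2 * t) = 2 * Real.cos t ^ 2 - 1 := Real.cos_two_mul t
    rcases le_or_gt (Real.cos t) (-1/2) with hu | hu
    · have h1 : 0 ≤ q 1 * (1 + Real.cos t) :=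
        mul_nonneg hq1pos.le (by nlinarith [Real.neg_one_le_cos t])
      have h2 : q 2 * (1/2) ≤ q 2 * (1 + Real.cos (2*t)) :=
        mul_le_mul_of_nonneg_left (by nlinarith [Real.neg_one_le_cos t]) hq2pos.le
      nlinarith
    · have h1 : q 1 * (1/2) ≤ q 1 * (1 + Real.cos t) :=
        mul_le_mul_of_nonneg_left (by nlinarith) hq1pos.le
      have h2 : 0 ≤ q 2 * (1 + Real.cos (2*t)) :=
        mul_nonneg hq2pos.le (by nlinarith [Real.neg_one_le_cos (2*t)])
      nlinarith
  have hlt1 : ∀ t : ℝ, 0 < t → t ≤ Real.pi → φ t < 1 := by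
    intro t ht htπ
    have h1 := hsub t {1}
    have hsum1 : ∑ m ∈ ({1} : Finset ℤ), q m * (1 - Real.cos (t * (m : ℝ)))
        = q 1 * (1 - Real.cos t) := by norm_num
    rw [hsum1] at h1
    have hπ := Real.pi_pos
    have hcne : Real.cos t ≠ 1 := by
      intro h
      have := (Real.cos_eq_one_iff_of_lt_of_lt (by linarith) (by linarith)).1 h
      linarith
    have hclt : Real.cos t < 1 := lt_of_le_of_ne (Real.cos_le_one t) hcne
    nlinarith [hq1pos]
  obtain ⟨a, hapos, hasmall⟩ :
      ∃ a > 0, ∀ t : ℝ, 0 < t → t ≤ Real.pi / 16 → a * t ^ α ≤ 1 - |φ t| := by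
    have hπ := Real.pi_pos
    set a₀ : ℝ := 1 / (8 * c * Real.pi ^ α) with ha₀
    have hπα : (0:ℝ) < Real.pi ^ α := Real.rpow_pos_of_pos hπ α
    have ha₀pos : 0 < a₀ := by
      rw [ha₀]
      positivity
    set a₁ : ℝ := q 1 / (Real.pi / 16) ^ α with ha₁
    have h16α : (0:ℝ) < (Real.pi / 16) ^ α := Real.rpow_pos_of_pos (by positivity) α
    have ha₁pos : 0 < a₁ := div_pos hq1pos h16α
    refine ⟨min a₀ a₁, lt_min ha₀pos ha₁pos, ?_⟩
    intro t ht ht16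
    have htα : (0:ℝ) < t ^ α := Real.rpow_pos_of_pos ht α
    have hb1 : a₀ * t ^ α ≤ 1 - φ t := by
      set j₀ : ℕ := ⌈Real.pi / (4 * t)⌉₊ with hj₀
      set j₁ : ℕ := ⌊Real.pi / (2 * t)⌋₊ with hj₁
      have ht4 : (0:ℝ) < 4 * t := by linarith
      have h4t : (4:ℝ) ≤ Real.pi / (4 * t) := by
        rw [le_div_iff₀ ht4]
        nlinarith
      have hj₀ge : Real.pi / (4 * t) ≤ (j₀ : ℝ) := Nat.le_ceil _
      have hj₀le : (j₀ : ℝ) ≤ Real.pi / (4 * t) + 1 :=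
        (Nat.ceil_lt_add_one (by positivity)).le
      have hj₁le : (j₁ : ℝ) ≤ Real.pi / (2 * t) := Nat.floor_le (by positivity)
      have hj₁ge : Real.pi / (2 * t) - 1 < (j₁ : ℝ) := by
        have := Nat.lt_floor_add_one (Real.pi / (2 * t))
        linarith
      have he24 : Real.pi / (2 * t) = 2 * (Real.pi / (4 * t)) := by
        field_simp
        ring
      have hlt : j₀ < j₁ := by
        have hr : (j₀ : ℝ) < (j₁ : ℝ) := by nlinarith
        exact_mod_cast hr
      set F : Finset ℤ := (Finset.Ico j₀ j₁).image (fun j : ℕ => (2 * j : ℤ)) with hFdef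
      have hterm : ∀ m ∈ F, (Real.pi / t) ^ (-α - 1) / c ≤ q m * (1 - Real.cos (t * (m : ℝ))) := by
        intro m hm
        rw [hFdef, Finset.mem_image] at hm
        obtain ⟨j, hj, rfl⟩ := hm
        rw [Finset.mem_Ico] at hj
        have hj4 : (4:ℝ) ≤ (j : ℝ) := by
          have : (j₀ : ℝ) ≤ (j : ℝ) := by exact_mod_cast hj.1
          linarith
        have hjlt : (j : ℝ) < (j₁ : ℝ) := by exact_mod_cast hj.2
        have hj0j : (j₀ : ℝ) ≤ (j : ℝ) := by exact_mod_cast hj.1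
        have h2jle : (2 * j : ℝ) ≤ Real.pi / t := by
          have hh : Real.pi / t = 2 * (Real.pi / (2 * t)) := by
            field_simp
          linarith
        have h2jge : Real.pi / 2 ≤ t * (2 * j) := by
          have hh : Real.pi / 2 = 2 * t * (Real.pi / (4 * t)) := by
            field_simp
            ring
          have hh2 : 2 * t * (Real.pi / (4 * t)) ≤ 2 * t * (j : ℝ) :=
            mul_le_mul_of_nonneg_left (le_trans hj₀ge hj0j) (by linarith)
          calc Real.pi / 2 = 2 * t * (Real.pi / (4 * t)) := hh
            _ ≤ 2 * t * (j : ℝ) := hh2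
            _ = t * (2 * j) := by ring
        have h2jπ : t * (2 * j) ≤ Real.pi := by
          calc t * (2 * j) ≤ t * (Real.pi / t) := by nlinarith
            _ = Real.pi := by field_simp
        -- value of q
        have h1n : 1 ≤ 2 * j := by
          have h1r : (1:ℝ) ≤ (j : ℝ) := by linarith
          have : 1 ≤ j := by exact_mod_cast h1r
          omega
        have hqeq : q ((2 * j : ℕ) : ℤ) = p (2 * j) / c := (hqval (2 * j) h1n).1
        have hpeq : p (2 * j) = ((2 * j : ℕ) : ℝ) ^ (-α - 1) := by
          rw [hpdef (2 * j) h1n, if_pos ⟨j, by ring⟩]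
        have hcast : ((2 * j : ℤ) : ℝ) = ((2 * j : ℕ) : ℝ) := by push_cast; ring
        have hqval2 : q (2 * j : ℤ) = ((2 * j : ℕ) : ℝ) ^ (-α - 1) / c := by
          rw [show ((2 * j : ℤ)) = ((2 * j : ℕ) : ℤ) by push_cast; ring, hqeq, hpeq]
        have hrle : (Real.pi / t) ^ (-α - 1) ≤ ((2 * j : ℕ) : ℝ) ^ (-α - 1) := by
          apply Real.rpow_le_rpow_of_nonpos (by positivity) (by push_cast; linarith)
          linarith
        have hcos : Real.cos (t * ((2 * j : ℤ) : ℝ)) ≤ 0 := by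
          rw [hcast]
          apply Real.cos_nonpos_of_pi_div_two_le_of_le
          · push_cast
            linarith
          · push_cast
            linarith
        calc (Real.pi / t) ^ (-α - 1) / c
            ≤ ((2 * j : ℕ) : ℝ) ^ (-α - 1) / c := by
              exact (div_le_div_iff_of_pos_right hcpos).mpr hrle
          _ = q (2 * j : ℤ) * 1 := by rw [hqval2, mul_one]
          _ ≤ q (2 * j : ℤ) * (1 - Real.cos (t * ((2 * j : ℤ) : ℝ))) := by
              apply mul_le_mul_of_nonneg_left _ (hqnn _)
              linarith
      have hcard : Real.pi / (8 * t) ≤ (F.card : ℝ) := by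
        have hcardeq : F.card = j₁ - j₀ := by
          rw [hFdef, Finset.card_image_of_injective _ (fun i j h => by omega),
            Nat.card_Ico]
        rw [hcardeq, Nat.cast_sub hlt.le]
        have he8 : Real.pi / (4 * t) = 2 * (Real.pi / (8 * t)) := by
          field_simp
          ring
        have h8t : (2:ℝ) ≤ Real.pi / (8 * t) := by
          rw [le_div_iff₀ (by linarith)]
          nlinarith
        nlinarith
      have hsum_ge : (F.card : ℝ) * ((Real.pi / t) ^ (-α - 1) / c)
          ≤ ∑ m ∈ F, q m * (1 - Real.cos (t * (m : ℝ))) := by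
        have := Finset.card_nsmul_le_sum F _ _ hterm
        simpa [nsmul_eq_mul] using this
      have hE : Real.pi / (8 * t) * ((Real.pi / t) ^ (-α - 1) / c) = a₀ * t ^ α := by
        have h1 : (Real.pi / t) ^ (-α - 1) = t ^ (α + 1) / Real.pi ^ (α + 1) := by
          rw [show -α - 1 = -(α + 1) by ring, Real.rpow_neg (by positivity),
            Real.div_rpow hπ.le ht.le, inv_div]
        rw [h1, Real.rpow_add_one ht.ne' α, Real.rpow_add_one (ne_of_gt hπ) α, ha₀]
        field_simp
      have hnn : (0:ℝ) ≤ (Real.pi / t) ^ (-α - 1) / c :=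
        div_nonneg (Real.rpow_nonneg (by positivity) _) hcpos.le
      calc a₀ * t ^ α = Real.pi / (8 * t) * ((Real.pi / t) ^ (-α - 1) / c) := hE.symm
        _ ≤ (F.card : ℝ) * ((Real.pi / t) ^ (-α - 1) / c) :=
            mul_le_mul_of_nonneg_right hcard hnn
        _ ≤ ∑ m ∈ F, q m * (1 - Real.cos (t * (m : ℝ))) := hsum_ge
        _ ≤ 1 - φ t := hsub t F
    have hb2 : a₁ * t ^ α ≤ 1 + φ t := by
      have hdiv1 : (t / (Real.pi / 16)) ^ α ≤ 1 :=
        Real.rpow_le_one (by positivity) (by rw [div_le_one (by positivity)]; linarith) hα₀.le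
      have h2 : a₁ * t ^ α = q 1 * (t / (Real.pi / 16)) ^ α := by
        rw [Real.div_rpow ht.le (by positivity), ha₁]
        field_simp
      have h3 : q 1 ≤ 1 + φ t := by
        have h1 := hsub' t {1}
        have hsum1 : ∑ m ∈ ({1} : Finset ℤ), q m * (1 + Real.cos (t * (m : ℝ)))
            = q 1 * (1 + Real.cos t) := by norm_num
        rw [hsum1] at h1
        have hcnn : 0 ≤ Real.cos t := Real.cos_nonneg_of_mem_Icc ⟨by linarith, by linarith⟩
        nlinarith [hq1pos]
      calc a₁ * t ^ α
          = q 1 * (t / (Real.pi / 16)) ^ α := h2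
        _ ≤ q 1 * 1 := mul_le_mul_of_nonneg_left hdiv1 hq1pos.le
        _ = q 1 := mul_one _
        _ ≤ 1 + φ t := h3
    rcases abs_cases (φ t) with ⟨he, _⟩ | ⟨he, _⟩
    · rw [he]
      calc min a₀ a₁ * t ^ α ≤ a₀ * t ^ α :=
            mul_le_mul_of_nonneg_right (min_le_left _ _) htα.le
        _ ≤ 1 - φ t := hb1
    · rw [he]
      have hmin : min a₀ a₁ * t ^ α ≤ a₁ * t ^ α :=
        mul_le_mul_of_nonneg_right (min_le_right _ _) htα.le
      linarith
  obtain ⟨ρ, hρ0, hρ1, hρb⟩ :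
      ∃ ρ : ℝ, 0 ≤ ρ ∧ ρ < 1 ∧ ∀ t : ℝ, Real.pi / 16 ≤ t → t ≤ Real.pi → |φ t| ≤ ρ := by
    have hπ := Real.pi_pos
    have hne : (Set.Icc (Real.pi / 16) Real.pi).Nonempty :=
      ⟨Real.pi, by constructor <;> nlinarith⟩
    obtain ⟨s, hs, hmax⟩ := isCompact_Icc.exists_isMaxOn hne
      (continuous_abs.comp φ_cont).continuousOn
    refine ⟨|φ s|, abs_nonneg _, ?_, fun t h1 h2 => hmax (Set.mem_Icc.2 ⟨h1, h2⟩)⟩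
    have hs1 : 0 < s := lt_of_lt_of_le (by positivity) hs.1
    rcases abs_cases (φ s) with ⟨he, _⟩ | ⟨he, _⟩
    · rw [he]
      exact hlt1 s hs1 hs.2
    · rw [he]
      linarith [hneg1 s]
  -- summability of the integrals
  set I : ℕ → ℝ := fun n => ∫ t in Set.Ioc (0:ℝ) Real.pi, |φ t| ^ n with hIdef
  have hInn : ∀ n, 0 ≤ I n := by
    intro n
    exact setIntegral_nonneg measurableSet_Ioc (fun t _ => pow_nonneg (abs_nonneg _) n)
  have hπ0 : (0:ℝ) < Real.pi := Real.pi_pos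
  have hφabs : ∀ t : ℝ, 0 < t → t ≤ Real.pi → |φ t| < 1 := by
    intro t ht htπ
    rcases le_or_gt t (Real.pi / 16) with h16 | h16
    · have := hasmall t ht h16
      have htα : (0:ℝ) < t ^ α := Real.rpow_pos_of_pos ht α
      nlinarith
    · exact lt_of_le_of_lt (hρb t h16.le htπ) hρ1
  set hfun : ℝ → ℝ := fun t => a⁻¹ * t ^ (-α) + (1 - ρ)⁻¹ with hfundef
  have hgeo : ∀ t : ℝ, t ∈ Set.Ioc (0:ℝ) Real.pi → ∀ N : ℕ,
      ∑ n ∈ Finset.range N, |φ t| ^ n ≤ hfun t := by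
    intro t ht N
    have habs := hφabs t ht.1 ht.2
    have h1 : ∑ n ∈ Finset.range N, |φ t| ^ n ≤ (1 - |φ t|)⁻¹ :=
      aux_geom (abs_nonneg _) habs N
    have hrw : t ^ (-α) = (t ^ α)⁻¹ := Real.rpow_neg ht.1.le α
    have htα : (0:ℝ) < t ^ α := Real.rpow_pos_of_pos ht.1 α
    have h2 : (1 - |φ t|)⁻¹ ≤ hfun t := by
      rcases le_or_gt t (Real.pi / 16) with h16 | h16
      · have h3 := hasmall t ht.1 h16
        have h4 : (1 - |φ t|)⁻¹ ≤ (a * t ^ α)⁻¹ := by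
          apply inv_anti₀ (mul_pos hapos htα)
          exact h3
        calc (1 - |φ t|)⁻¹ ≤ (a * t ^ α)⁻¹ := h4
          _ = a⁻¹ * t ^ (-α) := by rw [mul_inv, hrw]
          _ ≤ hfun t := by
              simp only [hfundef]
              have : (0:ℝ) ≤ (1 - ρ)⁻¹ := inv_nonneg.2 (by linarith)
              linarith
      · have h3 : 1 - ρ ≤ 1 - |φ t| := by
          have := hρb t h16.le ht.2
          linarith
        have h4 : (1 - |φ t|)⁻¹ ≤ (1 - ρ)⁻¹ := by
          apply inv_anti₀ (by linarith)
          exact h3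
        calc (1 - |φ t|)⁻¹ ≤ (1 - ρ)⁻¹ := h4
          _ ≤ hfun t := by
              simp only [hfundef]
              have h5 : (0:ℝ) ≤ a⁻¹ * t ^ (-α) :=
                mul_nonneg (inv_nonneg.2 hapos.le) (Real.rpow_nonneg ht.1.le _)
              linarith
    exact le_trans h1 h2
  have hfunint : IntegrableOn hfun (Set.Ioc (0:ℝ) Real.pi) volume := by
    have h1 : IntegrableOn (fun t : ℝ => t ^ (-α)) (Set.Ioc (0:ℝ) Real.pi) volume := by
      have := intervalIntegral.intervalIntegrable_rpow' (a := 0) (b := Real.pi) (r := -α) (by linarith)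
      rw [intervalIntegrable_iff, Set.uIoc_of_le hπ0.le] at this
      exact this
    exact ((h1.const_mul a⁻¹).add (integrableOn_const measure_Ioc_lt_top.ne))
  have hφint : ∀ n : ℕ, IntegrableOn (fun t => |φ t| ^ n) (Set.Ioc (0:ℝ) Real.pi) volume :=
    fun n => ((φ_cont.abs.pow n)).integrableOn_Ioc
  have hIsum : Summable I := by
    apply summable_of_sum_range_le hInn
    intro N
    rw [hIdef]
    have h1 : ∑ n ∈ Finset.range N, ∫ t in Set.Ioc (0:ℝ) Real.pi, |φ t| ^ n
        = ∫ t in Set.Ioc (0:ℝ) Real.pi, (∑ n ∈ Finset.range N, |φ t| ^ n) := by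
      rw [integral_finset_sum _ (fun n _ => hφint n)]
    calc ∑ n ∈ Finset.range N, ∫ t in Set.Ioc (0:ℝ) Real.pi, |φ t| ^ n
        = ∫ t in Set.Ioc (0:ℝ) Real.pi, (∑ n ∈ Finset.range N, |φ t| ^ n) := h1
      _ ≤ ∫ t in Set.Ioc (0:ℝ) Real.pi, hfun t := by
          apply setIntegral_mono_on
            (integrable_finset_sum _ (fun n _ => hφint n)) hfunint measurableSet_Ioc
          intro t ht
          exact hgeo t ht N
      _ ≤ ∫ t in Set.Ioc (0:ℝ) Real.pi, hfun t := le_rfl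
  have hPle : ∀ (n : ℕ) (x : ℤ),
      P {ω | S n ω = x} ≤ ENNReal.ofReal (I n / Real.pi) := by
    intro n x
    have hπle : (-Real.pi) ≤ Real.pi := by linarith
    have hint1 : IntervalIntegrable (fun t => Real.cos (t * (x:ℝ)) * φ t ^ n)
        volume (-Real.pi) Real.pi :=
      (((Real.continuous_cos.comp (continuous_id.mul continuous_const)).mul
        (φ_cont.pow n))).intervalIntegrable _ _
    have hint2 : IntervalIntegrable (fun t => |φ t| ^ n) volume (-Real.pi) Real.pi :=
      ((φ_cont.abs.pow n)).intervalIntegrable _ _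
    have hmono : ∫ t in (-Real.pi)..Real.pi, Real.cos (t * (x:ℝ)) * φ t ^ n
        ≤ ∫ t in (-Real.pi)..Real.pi, |φ t| ^ n := by
      apply intervalIntegral.integral_mono_on hπle hint1 hint2
      intro t _
      have h1 : Real.cos (t * (x:ℝ)) * φ t ^ n ≤ |Real.cos (t * (x:ℝ)) * φ t ^ n| :=
        le_abs_self _
      have h2 : |Real.cos (t * (x:ℝ)) * φ t ^ n| = |Real.cos (t * (x:ℝ))| * |φ t| ^ n := by
        rw [abs_mul, abs_pow]
      have h3 : |Real.cos (t * (x:ℝ))| * |φ t| ^ n ≤ 1 * |φ t| ^ n :=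
        mul_le_mul_of_nonneg_right (Real.abs_cos_le_one _) (pow_nonneg (abs_nonneg _) n)
      rw [h2] at h1
      linarith
    have hsplit : ∫ t in (-Real.pi)..Real.pi, |φ t| ^ n = 2 * I n := by
      have e0 : ∫ t in (-Real.pi)..Real.pi, |φ t| ^ n
          = (∫ t in (-Real.pi)..(0:ℝ), |φ t| ^ n) + ∫ t in (0:ℝ)..Real.pi, |φ t| ^ n :=
        (intervalIntegral.integral_add_adjacent_intervals
          (((φ_cont.abs.pow n)).intervalIntegrable _ _)
          (((φ_cont.abs.pow n)).intervalIntegrable _ _)).symm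
      have e1 : (∫ t in (-Real.pi)..(0:ℝ), |φ t| ^ n) = ∫ t in (0:ℝ)..Real.pi, |φ t| ^ n := by
        have e2 := intervalIntegral.integral_comp_neg (a := (0:ℝ)) (b := Real.pi)
          (fun t => |φ t| ^ n)
        have e3 : (∫ t in (0:ℝ)..Real.pi, |φ (-t)| ^ n) = ∫ t in (0:ℝ)..Real.pi, |φ t| ^ n :=
          intervalIntegral.integral_congr (fun u _ => by rw [φ_even])
        rw [e3] at e2
        norm_num at e2
        exact e2.symm
      have e4 : (∫ t in (0:ℝ)..Real.pi, |φ t| ^ n) = I n := by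
        simp only [hIdef]
        exact intervalIntegral.integral_of_le hπ0.le
      rw [e0, e1, e4]
      ring
    have htoReal : (P {ω | S n ω = x}).toReal ≤ I n / Real.pi := by
      have h5 := hinv n x
      have h6 : (P {ω | S n ω = x}).toReal * (2 * Real.pi) ≤ 2 * I n := by
        rw [h5]
        exact le_trans hmono (le_of_eq hsplit)
      rw [le_div_iff₀ hπ0]
      linarith
    calc P {ω | S n ω = x} = ENNReal.ofReal ((P {ω | S n ω = x}).toReal) :=
          (ENNReal.ofReal_toReal (measure_ne_top _ _)).symm
      _ ≤ ENNReal.ofReal (I n / Real.pi) := ENNReal.ofReal_le_ofReal htoReal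
  -- Borel-Cantelli
  have hBC : ∀ M : ℕ, ∀ᵐ ω ∂P, ∀ᶠ n in atTop, (M : ℤ) < |S n ω| := by
    intro M
    set A : ℕ → Set Ω := fun n => {ω | |S n ω| ≤ (M:ℤ)} with hA
    set T : Finset ℤ := Finset.Icc (-(M:ℤ)) (M:ℤ) with hT
    have hAsub : ∀ n, A n ⊆ ⋃ x ∈ T, {ω | S n ω = x} := by
      intro n ω hω
      simp only [Set.mem_iUnion]
      refine ⟨S n ω, ?_, rfl⟩
      have hω' : |S n ω| ≤ (M:ℤ) := hω
      rw [hT, Finset.mem_Icc]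
      exact abs_le.1 hω'
    have hAle : ∀ n, P (A n) ≤ (T.card : ENNReal) * ENNReal.ofReal (I n / Real.pi) := by
      intro n
      calc P (A n) ≤ P (⋃ x ∈ T, {ω | S n ω = x}) := measure_mono (hAsub n)
        _ ≤ ∑ x ∈ T, P {ω | S n ω = x} := measure_biUnion_finset_le _ _
        _ ≤ ∑ _x ∈ T, ENNReal.ofReal (I n / Real.pi) :=
            Finset.sum_le_sum (fun x _ => hPle n x)
        _ = (T.card : ENNReal) * ENNReal.ofReal (I n / Real.pi) := by
            rw [Finset.sum_const, nsmul_eq_mul]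
    have htsum : ∑' n, P (A n) ≠ ⊤ := by
      have h1 : ∑' n, P (A n) ≤ (T.card : ENNReal) * ∑' n, ENNReal.ofReal (I n / Real.pi) := by
        calc ∑' n, P (A n) ≤ ∑' n, ((T.card : ENNReal) * ENNReal.ofReal (I n / Real.pi)) :=
              ENNReal.tsum_le_tsum hAle
          _ = (T.card : ENNReal) * ∑' n, ENNReal.ofReal (I n / Real.pi) := ENNReal.tsum_mul_left
      have h2 : ∑' n, ENNReal.ofReal (I n / Real.pi) = ENNReal.ofReal (∑' n, I n / Real.pi) :=
        (ENNReal.ofReal_tsum_of_nonneg (fun n => div_nonneg (hInn n) hπ0.le)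
          (hIsum.div_const _)).symm
      rw [h2] at h1
      exact ne_top_of_le_ne_top (ENNReal.mul_ne_top (by simp) ENNReal.ofReal_ne_top) h1
    have hlimsup := measure_limsup_atTop_eq_zero htsum
    have hae2 : ∀ᵐ ω ∂P, ω ∉ limsup A atTop := measure_eq_zero_iff_ae_notMem.1 hlimsup
    filter_upwards [hae2] with ω hω
    have h2 : ∀ᶠ n in atTop, ω ∉ A n := by
      by_contra h
      apply hω
      rw [mem_limsup_iff_frequently_mem]
      rw [Filter.not_eventually] at h
      exact h.mono (fun n hn => not_not.1 hn)
    filter_upwards [h2] with n hn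
    have hn' : ¬ |S n ω| ≤ (M:ℤ) := hn
    exact not_le.1 hn'
  have hae := ae_all_iff.2 hBC
  filter_upwards [hae] with ω hω
  rw [tendsto_atTop]
  intro b
  filter_upwards [hω b.toNat] with n hn
  calc b ≤ (b.toNat : ℤ) := Int.self_le_toNat b
    _ ≤ |S n ω| := le_of_lt hn
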